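/- Let G be a connected graph with minimum degree δ and let k be an integer with 3 ≤ k ≤ |V(G)|. Then κ_k(G) ≤ δ. Moreover, if G contains two adjacent vertices both of degree δ, then κ_k(G) ≤ δ − 1. -/
import Mathlib


open SimpleGraph

/-- The bubble-sort graph `B_n`: the Cayley graph on `Sym(n)` whose connection set is the set of
adjacent transpositions `[i, i+1]`, `1 ≤ i ≤ n-1`; `σ` and `τ` are adjacent iff
`τ = σ * [i, i+1]` for some `i`. -/
def bubbleSortGraph (n : ℕ) : SimpleGraph (Equiv.Perm (Fin n)) :=
  SimpleGraph.fromRel (fun σ τ => ∃ i j : Fin n, (j : ℕ) = (i : ℕ) + 1 ∧ τ = σ * Equiv.swap i j)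

/-- `T` is a family of internally disjoint trees connecting `S` in `G`: each `T i` is a tree
(as a subgraph of `G`) containing all vertices of `S`, the trees are pairwise edge disjoint, and
any two of them share exactly the vertices of `S`. -/
def InternallyDisjointTrees {V : Type*} (G : SimpleGraph V) (S : Set V) {ℓ : ℕ}
    (T : Fin ℓ → G.Subgraph) : Prop :=
  (∀ i, (T i).coe.IsTree ∧ S ⊆ (T i).verts) ∧
    Pairwise fun i j =>
      (T i).edgeSet ∩ (T j).edgeSet = ∅ ∧ (T i).verts ∩ (T j).verts = S

/-- `κ_G(S)`: the maximum number of internally disjoint trees connecting `S` in `G`. -/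
noncomputable def treeConnectivity {V : Type*} (G : SimpleGraph V) (S : Set V) : ℕ :=
  sSup {ℓ : ℕ | ∃ T : Fin ℓ → G.Subgraph, InternallyDisjointTrees G S T}

/-- The generalized `k`-connectivity `κ_k(G) = min {κ_G(S) : S ⊆ V(G), |S| = k}`. -/
noncomputable def generalizedConnectivity {V : Type*} (G : SimpleGraph V) (k : ℕ) : ℕ :=
  sInf {m : ℕ | ∃ S : Finset V, S.card = k ∧ m = treeConnectivity G ↑S}

/-- The vertex connectivity `κ(G)`: the minimum cardinality of a set `S` of vertices such that
`G - S` is disconnected or has at most one vertex. -/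
noncomputable def vertexConnectivity {V : Type*} (G : SimpleGraph V) : ℕ :=
  sInf {k : ℕ | ∃ S : Set V,
    S.ncard = k ∧ (¬ (G.induce Sᶜ).Connected ∨ Sᶜ.ncard ≤ 1)}

/-- `V_i`: the set of permutations `σ` of `[n]` with `σ(n) = i` (last entry equal to `i`). -/
def Vpart (n : ℕ) (hn : 0 < n) (i : Fin n) : Set (Equiv.Perm (Fin n)) :=
  {σ | σ ⟨n - 1, Nat.sub_lt hn Nat.one_pos⟩ = i}

lemma exists_adj_of_walk' {W : Type*} {H : SimpleGraph W} {a b : W} (p : H.Walk a b)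
    (hab : a ≠ b) : ∃ c, H.Adj a c := by
  cases p with
  | nil => exact absurd rfl hab
  | cons h _ => exact ⟨_, h⟩

lemma walk_confined' {W : Type*} {H : SimpleGraph W} {P : W → Prop}
    (hP : ∀ a b, P a → H.Adj a b → P b) {a b : W} (p : H.Walk a b) (ha : P a) : P b := by
  induction p with
  | nil => exact ha
  | cons h p ih => exact ih (hP _ _ ha h)

lemma sub_exists_adj {V : Type*} {G : SimpleGraph V} {H : G.Subgraph}
    (hc : H.coe.Connected) {u s : V} (hu : u ∈ H.verts) (hs : s ∈ H.verts) (hus : u ≠ s) :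
    ∃ w, H.Adj u w := by
  obtain ⟨p⟩ := hc ⟨u, hu⟩ ⟨s, hs⟩
  obtain ⟨c, hc'⟩ := exists_adj_of_walk' p (by simp [Subtype.ext_iff, hus])
  exact ⟨c, by simpa using hc'⟩

section Main
variable {V : Type*} [Fintype V] {G : SimpleGraph V} [DecidableRel G.Adj]

open Classical in
/-- neighbors of `u` used by tree `i` -/
noncomputable def Nbr {V : Type*} [Fintype V] {ℓ : ℕ} (G : SimpleGraph V) [DecidableRel G.Adj]
    (T : Fin ℓ → G.Subgraph) (u : V) (i : Fin ℓ) : Finset V :=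
  (G.neighborFinset u).filter (fun w => (T i).Adj u w)

lemma mem_Nbr {ℓ : ℕ} {T : Fin ℓ → G.Subgraph} {u x : V} {i : Fin ℓ} :
    x ∈ Nbr G T u i ↔ (T i).Adj u x := by
  classical
  simp only [Nbr, Finset.mem_filter, SimpleGraph.mem_neighborFinset]
  constructor
  · exact fun h => by convert h.2
  · exact fun h => ⟨(T i).adj_sub h, by convert h⟩

lemma Nbr_disjoint {ℓ : ℕ} {T : Fin ℓ → G.Subgraph} {S : Set V}
    (hT : InternallyDisjointTrees G S T) (u : V) {i j : Fin ℓ} (hij : i ≠ j) :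
    Disjoint (Nbr G T u i) (Nbr G T u j) := by
  rw [Finset.disjoint_left]
  intro w hwi hwj
  rw [mem_Nbr] at hwi hwj
  have h1 : s(u, w) ∈ (T i).edgeSet := Subgraph.mem_edgeSet.2 hwi
  have h2 : s(u, w) ∈ (T j).edgeSet := Subgraph.mem_edgeSet.2 hwj
  have := (hT.2 hij).1
  exact absurd (Set.mem_inter h1 h2) (by simp [this])

lemma Nbr_nonempty {ℓ : ℕ} {T : Fin ℓ → G.Subgraph} {S : Set V}
    (hT : InternallyDisjointTrees G S T) {u s : V} (hu : u ∈ S) (hs : s ∈ S) (hus : u ≠ s)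
    (i : Fin ℓ) : (Nbr G T u i).Nonempty := by
  obtain ⟨htree, hsub⟩ := hT.1 i
  obtain ⟨w, hw⟩ := sub_exists_adj htree.isConnected (hsub hu) (hsub hs) hus
  exact ⟨w, mem_Nbr.2 hw⟩

lemma sum_Nbr_le {ℓ : ℕ} {T : Fin ℓ → G.Subgraph} {S : Set V}
    (hT : InternallyDisjointTrees G S T) (u : V) :
    ∑ i : Fin ℓ, (Nbr G T u i).card ≤ G.degree u := by
  classical
  rw [← Finset.card_biUnion (fun i _ j _ hij => Nbr_disjoint hT u hij)]
  rw [← SimpleGraph.card_neighborFinset_eq_degree]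
  refine Finset.card_le_card ?_
  intro w hw
  simp only [Finset.mem_biUnion] at hw
  obtain ⟨i, _, hw⟩ := hw
  exact SimpleGraph.mem_neighborFinset _ _ _ |>.2 ((T i).adj_sub (mem_Nbr.1 hw))

lemma idt_le_degree {ℓ : ℕ} {T : Fin ℓ → G.Subgraph} {S : Set V}
    (hT : InternallyDisjointTrees G S T) {u s : V} (hu : u ∈ S) (hs : s ∈ S) (hus : u ≠ s) :
    ℓ ≤ G.degree u := by
  calc ℓ = ∑ _i : Fin ℓ, 1 := by simp
    _ ≤ ∑ i : Fin ℓ, (Nbr G T u i).card :=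
        Finset.sum_le_sum fun i _ => Finset.card_pos.2 (Nbr_nonempty hT hu hs hus i)
    _ ≤ G.degree u := sum_Nbr_le hT u

lemma idt_two_mul_lt {ℓ : ℕ} {T : Fin ℓ → G.Subgraph} {S : Set V}
    (hT : InternallyDisjointTrees G S T) {u v w : V} (hu : u ∈ S) (hv : v ∈ S) (hw : w ∈ S)
    (huv : G.Adj u v) (hwu : w ≠ u) (hwv : w ≠ v) :
    2 * ℓ + 1 ≤ G.degree u + G.degree v := by
  classical
  have hne : u ≠ v := huv.ne
  have hlowu : ∀ i : Fin ℓ, 1 ≤ (Nbr G T u i).card := fun i =>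
    Finset.card_pos.2 (Nbr_nonempty hT hu hw (Ne.symm hwu) i)
  have hlowv : ∀ i : Fin ℓ, 1 ≤ (Nbr G T v i).card := fun i =>
    Finset.card_pos.2 (Nbr_nonempty hT hv hw (Ne.symm hwv) i)
  have hAu := sum_Nbr_le hT u
  have hAv := sum_Nbr_le hT v
  by_cases hE : ∃ i, (T i).Adj u v
  · obtain ⟨i₀, hi₀⟩ := hE
    -- the tree containing edge uv contributes at least 3
    have h3 : 3 ≤ (Nbr G T u i₀).card + (Nbr G T v i₀).card := by
      by_contra h
      push_neg at h
      have h1 : (Nbr G T u i₀).card = 1 := by have := hlowu i₀; have := hlowv i₀; omega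
      have h2 : (Nbr G T v i₀).card = 1 := by have := hlowu i₀; have := hlowv i₀; omega
      have hNu : Nbr G T u i₀ = {v} :=
        Finset.eq_singleton_iff_unique_mem.2 ⟨mem_Nbr.2 hi₀, fun x hx => by
          obtain ⟨a, ha⟩ := Finset.card_eq_one.1 h1
          rw [ha] at hx
          simp at hx
          have : v ∈ ({a} : Finset V) := by rw [← ha]; exact mem_Nbr.2 hi₀
          simp at this; rw [hx, this]⟩
      have hNv : Nbr G T v i₀ = {u} :=
        Finset.eq_singleton_iff_unique_mem.2 ⟨mem_Nbr.2 hi₀.symm, fun x hx => by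
          obtain ⟨a, ha⟩ := Finset.card_eq_one.1 h2
          rw [ha] at hx
          simp at hx
          have : u ∈ ({a} : Finset V) := by rw [← ha]; exact mem_Nbr.2 hi₀.symm
          simp at this; rw [hx, this]⟩
      obtain ⟨htree, hsub⟩ := hT.1 i₀
      obtain ⟨p⟩ := htree.isConnected ⟨u, hsub hu⟩ ⟨w, hsub hw⟩
      have := walk_confined' (P := fun x : (T i₀).verts => (x : V) = u ∨ (x : V) = v)
        (fun a b ha hab => by
          rw [Subgraph.coe_adj] at hab
          rcases ha with ha | ha
          · rw [ha] at hab
            have : (b : V) ∈ Nbr G T u i₀ := mem_Nbr.2 hab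
            rw [hNu] at this; simp at this; right; exact this
          · rw [ha] at hab
            have : (b : V) ∈ Nbr G T v i₀ := mem_Nbr.2 hab
            rw [hNv] at this; simp at this; left; exact this) p (Or.inl rfl)
      simp only at this
      rcases this with h' | h' <;> [exact hwu h'; exact hwv h']
    have key : ∑ i : Fin ℓ, 2 < ∑ i : Fin ℓ, ((Nbr G T u i).card + (Nbr G T v i).card) := by
      refine Finset.sum_lt_sum (fun i _ => by have := hlowu i; have := hlowv i; omega)
        ⟨i₀, Finset.mem_univ _, by omega⟩
    rw [Finset.sum_add_distrib] at key
    simp only [Finset.sum_const, Finset.card_univ, Fintype.card_fin, smul_eq_mul] at key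
    omega
  · push_neg at hE
    -- edge uv unused: both sums avoid the other endpoint
    have hvmem : v ∈ G.neighborFinset u := (SimpleGraph.mem_neighborFinset _ _ _).2 huv
    have humem : u ∈ G.neighborFinset v := (SimpleGraph.mem_neighborFinset _ _ _).2 huv.symm
    have hAu' : ∑ i : Fin ℓ, (Nbr G T u i).card ≤ G.degree u - 1 := by
      rw [← Finset.card_biUnion (fun i _ j _ hij => Nbr_disjoint hT u hij)]
      have hsub : Finset.univ.biUnion (Nbr G T u) ⊆ (G.neighborFinset u).erase v := by
        intro x hx
        simp only [Finset.mem_biUnion] at hx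
        obtain ⟨i, _, hx⟩ := hx
        rw [mem_Nbr] at hx
        refine Finset.mem_erase.2 ⟨fun hxv => hE i (hxv ▸ hx), ?_⟩
        exact (SimpleGraph.mem_neighborFinset _ _ _).2 ((T i).adj_sub hx)
      calc (Finset.univ.biUnion (Nbr G T u)).card ≤ ((G.neighborFinset u).erase v).card :=
            Finset.card_le_card hsub
        _ = G.degree u - 1 := by
            rw [Finset.card_erase_of_mem hvmem, SimpleGraph.card_neighborFinset_eq_degree]
    have hAv' : ∑ i : Fin ℓ, (Nbr G T v i).card ≤ G.degree v - 1 := by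
      rw [← Finset.card_biUnion (fun i _ j _ hij => Nbr_disjoint hT v hij)]
      have hsub : Finset.univ.biUnion (Nbr G T v) ⊆ (G.neighborFinset v).erase u := by
        intro x hx
        simp only [Finset.mem_biUnion] at hx
        obtain ⟨i, _, hx⟩ := hx
        rw [mem_Nbr] at hx
        refine Finset.mem_erase.2 ⟨fun hxu => hE i (hxu ▸ hx.symm), ?_⟩
        exact (SimpleGraph.mem_neighborFinset _ _ _).2 ((T i).adj_sub hx)
      calc (Finset.univ.biUnion (Nbr G T v)).card ≤ ((G.neighborFinset v).erase u).card :=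
            Finset.card_le_card hsub
        _ = G.degree v - 1 := by
            rw [Finset.card_erase_of_mem humem, SimpleGraph.card_neighborFinset_eq_degree]
    have key : 2 * ℓ ≤ ∑ i : Fin ℓ, ((Nbr G T u i).card + (Nbr G T v i).card) := by
      calc 2 * ℓ = ∑ _i : Fin ℓ, 2 := by simp [mul_comm]
        _ ≤ _ := Finset.sum_le_sum (fun i _ => by have := hlowu i; have := hlowv i; omega)
    rw [Finset.sum_add_distrib] at key
    have hdu : 1 ≤ G.degree u := by
      rw [← SimpleGraph.card_neighborFinset_eq_degree]; exact Finset.card_pos.2 ⟨v, hvmem⟩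
    have hdv : 1 ≤ G.degree v := by
      rw [← SimpleGraph.card_neighborFinset_eq_degree]; exact Finset.card_pos.2 ⟨u, humem⟩
    omega

end Main

/-- Let `G` be a connected graph with minimum degree `δ` and `3 ≤ k ≤ |V(G)|`. Then
`κ_k(G) ≤ δ`; moreover, if `G` has two adjacent vertices both of degree `δ`, then
`κ_k(G) ≤ δ - 1`. -/
theorem generalizedConnectivity_le_minDegree {V : Type*} [Fintype V] [Nonempty V]
    (G : SimpleGraph V) [DecidableRel G.Adj] (hG : G.Connected)
    (k : ℕ) (hk3 : 3 ≤ k) (hk : k ≤ Fintype.card V) :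
    generalizedConnectivity G k ≤ G.minDegree ∧
      ((∃ u v : V, G.Adj u v ∧ G.degree u = G.minDegree ∧ G.degree v = G.minDegree) →
        generalizedConnectivity G k ≤ G.minDegree - 1) := by
  classical
  have hzero : ∀ (S : Set V), (0 : ℕ) ∈
      {ℓ : ℕ | ∃ T : Fin ℓ → G.Subgraph, InternallyDisjointTrees G S T} :=
    fun S => ⟨fun i => i.elim0, fun i => i.elim0, fun i j h => i.elim0⟩
  constructor
  · obtain ⟨u, hu⟩ := G.exists_minimal_degree_vertex
    obtain ⟨S, hSsub, hScard⟩ := Finset.exists_superset_card_eq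
      (s := {u}) (n := k) (by simp; omega) hk
    have huS : u ∈ S := hSsub (by simp)
    obtain ⟨s, hsS, hsu⟩ := Finset.exists_mem_ne (s := S) (by rw [hScard]; omega) u
    have htc : treeConnectivity G ↑S ≤ G.degree u := by
      refine csSup_le ⟨0, hzero _⟩ ?_
      rintro ℓ ⟨T, hT⟩
      exact idt_le_degree hT (Finset.mem_coe.2 huS) (Finset.mem_coe.2 hsS) (Ne.symm hsu)
    calc generalizedConnectivity G k ≤ treeConnectivity G ↑S :=
          Nat.sInf_le ⟨S, hScard, rfl⟩
      _ ≤ G.degree u := htc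
      _ = G.minDegree := hu.symm
  · rintro ⟨u, v, huv, hdu, hdv⟩
    obtain ⟨S, hSsub, hScard⟩ := Finset.exists_superset_card_eq
      (s := {u, v}) (n := k) (le_trans Finset.card_le_two (by omega)) hk
    have huS : u ∈ S := hSsub (by simp)
    have hvS : v ∈ S := hSsub (by simp)
    obtain ⟨w, hwS, hwu, hwv⟩ : ∃ w ∈ S, w ≠ u ∧ w ≠ v := by
      by_contra h
      push_neg at h
      have hsub : S ⊆ {u, v} := fun x hx => by
        by_cases hxu : x = u
        · simp [hxu]
        · simp [h x hx hxu]
      have := Finset.card_le_card hsub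
      have h2 : ({u, v} : Finset V).card ≤ 2 := Finset.card_le_two
      omega
    have htc : treeConnectivity G ↑S ≤ G.minDegree - 1 := by
      refine csSup_le ⟨0, hzero _⟩ ?_
      rintro ℓ ⟨T, hT⟩
      have := idt_two_mul_lt hT (Finset.mem_coe.2 huS) (Finset.mem_coe.2 hvS)
        (Finset.mem_coe.2 hwS) huv hwu hwv
      omega
    calc generalizedConnectivity G k ≤ treeConnectivity G ↑S :=
          Nat.sInf_le ⟨S, hScard, rfl⟩
      _ ≤ G.minDegree - 1 := htc
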